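/- Let Q be a set of finite positive measure and f ∈ L¹(Q, ℂ^d). Suppose g : Q → ℂ^d is measurable and g(x) belongs to the convex body average ⟪f⟫_Q for almost every x ∈ Q. Then there exists a measurable function H : Q × Q → ℂ with ‖H‖_∞ ≤ |Q|^{-1} such that g(z) = ∫_Q H(z,w) f(w) dV(w) for a.e. z ∈ Q. -/

import Mathlib

open MeasureTheory
open scoped ENNReal

/-- The convex body average `⟪f⟫_Q`: the set of vectors `⟨φ f⟩_Q = (1/|Q|)∫_Q φ f dV` where
`φ` ranges over measurable complex-valued functions with `‖φ‖_∞ ≤ 1`. -/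
def convexBodyAvg {d : ℕ} {α : Type*} [MeasurableSpace α] (μ : Measure α) (Q : Set α)
    (f : α → Fin d → ℂ) : Set (Fin d → ℂ) :=
  {v | ∃ φ : α → ℂ, Measurable φ ∧ (∀ x, ‖φ x‖ ≤ 1) ∧
    ∀ j, v j = ((μ Q).toReal⁻¹ : ℂ) * ∫ x in Q, φ x * f x j ∂μ}

namespace Stmt5Aux

variable {α : Type*} [MeasurableSpace α] {d : ℕ}

lemma ae_fst {μ ν : Measure α} [SFinite ν] {p : α → Prop} (h : ∀ᵐ x ∂μ, p x) :
    ∀ᵐ q ∂(μ.prod ν), p q.1 :=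
  (Measure.quasiMeasurePreserving_fst).ae h

variable (ν : Measure α) [IsFiniteMeasure ν] (f g : α → Fin d → ℂ)

/-- The kernel `(z,w) ↦ ∑ j, u j z * f w j`. -/
noncomputable def ker (u : Fin d → (α →₁[ν] ℂ)) : α × α → ℂ :=
  fun p => ∑ j, (u j : α → ℂ) p.1 * f p.2 j

lemma ker_int (hf : ∀ j, Integrable (fun x => f x j) ν) (u : Fin d → (α →₁[ν] ℂ)) :
    Integrable (ker ν f u) (ν.prod ν) :=
  integrable_finset_sum _ fun j _ => (L1.integrable_coeFn (u j)).mul_prod (hf j)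

lemma ker_add (u v : Fin d → (α →₁[ν] ℂ)) :
    ker ν f (u + v) =ᵐ[ν.prod ν] ker ν f u + ker ν f v := by
  have h : ∀ᵐ z ∂ν, ∀ j, ((u j + v j : α →₁[ν] ℂ) : α → ℂ) z
      = (u j : α → ℂ) z + (v j : α → ℂ) z := by
    rw [ae_all_iff]
    intro j
    filter_upwards [Lp.coeFn_add (u j) (v j)] with z hz using by simpa using hz
  filter_upwards [ae_fst (ν := ν) h] with p hp
  simp only [ker, Pi.add_apply, ← Finset.sum_add_distrib]
  exact Finset.sum_congr rfl fun j _ => by rw [hp j, add_mul]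

lemma ker_smul (a : ℂ) (u : Fin d → (α →₁[ν] ℂ)) :
    ker ν f (a • u) =ᵐ[ν.prod ν] a • ker ν f u := by
  have h : ∀ᵐ z ∂ν, ∀ j, ((a • u j : α →₁[ν] ℂ) : α → ℂ) z = a * (u j : α → ℂ) z := by
    rw [ae_all_iff]
    intro j
    filter_upwards [Lp.coeFn_smul a (u j)] with z hz using by simpa using hz
  filter_upwards [ae_fst (ν := ν) h] with p hp
  simp only [ker, Pi.smul_apply, smul_eq_mul, Finset.mul_sum]
  exact Finset.sum_congr rfl fun j _ => by rw [hp j, mul_assoc]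

variable {f} in
/-- The linear map sending `u` to the `L¹` class of its kernel. -/
noncomputable def PiL (hf : ∀ j, Integrable (fun x => f x j) ν) :
    (Fin d → (α →₁[ν] ℂ)) →ₗ[ℂ] ((α × α) →₁[ν.prod ν] ℂ) where
  toFun u := (ker_int ν f hf u).toL1 _
  map_add' u v := by
    rw [← Integrable.toL1_add _ _ (ker_int ν f hf u) (ker_int ν f hf v),
      Integrable.toL1_eq_toL1_iff]
    exact ker_add ν f u v
  map_smul' a u := by
    rw [RingHom.id_apply, ← Integrable.toL1_smul _ (ker_int ν f hf u),
      Integrable.toL1_eq_toL1_iff]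
    exact ker_smul ν f a u

variable {f} in
lemma PiL_norm (hf : ∀ j, Integrable (fun x => f x j) ν) (u : Fin d → (α →₁[ν] ℂ)) :
    ‖PiL ν hf u‖ = ∫ p, ‖ker ν f u p‖ ∂(ν.prod ν) :=
  L1.norm_of_fun_eq_integral_norm (ker_int ν f hf u)

variable {f} in
lemma PiL_coe (hf : ∀ j, Integrable (fun x => f x j) ν) (u : Fin d → (α →₁[ν] ℂ)) :
    (PiL ν hf u : α × α → ℂ) =ᵐ[ν.prod ν] ker ν f u :=
  (ker_int ν f hf u).coeFn_toL1

variable {g} in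
/-- The functional `u ↦ ∑ j, ∫ u j * g · j`. -/
noncomputable def LamL
    (hgi : ∀ (u₀ : α →₁[ν] ℂ) j, Integrable (fun z => (u₀ : α → ℂ) z * g z j) ν) :
    (Fin d → (α →₁[ν] ℂ)) →ₗ[ℂ] ℂ where
  toFun u := ∑ j, ∫ z, (u j : α → ℂ) z * g z j ∂ν
  map_add' u v := by
    have h : ∀ j : Fin d, ∫ z, (((u + v) j : α →₁[ν] ℂ) : α → ℂ) z * g z j ∂ν
        = (∫ z, (u j : α → ℂ) z * g z j ∂ν) + ∫ z, (v j : α → ℂ) z * g z j ∂ν := by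
      intro j
      rw [← integral_add (hgi (u j) j) (hgi (v j) j)]
      refine integral_congr_ae ?_
      filter_upwards [Lp.coeFn_add (u j) (v j)] with z hz
      simp only [Pi.add_apply] at hz ⊢
      rw [hz, add_mul]
    simp only [h, Finset.sum_add_distrib]
  map_smul' a u := by
    have h : ∀ j : Fin d, ∫ z, (((a • u) j : α →₁[ν] ℂ) : α → ℂ) z * g z j ∂ν
        = a * ∫ z, (u j : α → ℂ) z * g z j ∂ν := by
      intro j
      rw [← integral_const_mul]
      refine integral_congr_ae ?_
      filter_upwards [Lp.coeFn_smul a (u j)] with z hz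
      simp only [Pi.smul_apply, smul_eq_mul] at hz ⊢
      rw [hz, mul_assoc]
    simp only [h, ← Finset.mul_sum]
    rfl

variable {ν f g} in
lemma LamL_le (c : ℝ) (hf : ∀ j, Integrable (fun x => f x j) ν)
    (hgi : ∀ (u₀ : α →₁[ν] ℂ) j, Integrable (fun z => (u₀ : α → ℂ) z * g z j) ν)
    (hgd : ∀ᵐ z ∂ν, ∀ a : Fin d → ℂ,
      ‖∑ j, a j * g z j‖ ≤ c * ∫ w, ‖∑ j, a j * f w j‖ ∂ν)
    (u : Fin d → (α →₁[ν] ℂ)) :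
    ‖LamL ν hgi u‖ ≤ c * ‖PiL ν hf u‖ := by
  have h1 : LamL ν hgi u = ∫ z, ∑ j, (u j : α → ℂ) z * g z j ∂ν := by
    show (∑ j, ∫ z, (u j : α → ℂ) z * g z j ∂ν) = _
    exact (integral_finset_sum _ fun j _ => hgi (u j) j).symm
  rw [h1]
  calc ‖∫ z, ∑ j, (u j : α → ℂ) z * g z j ∂ν‖
      ≤ ∫ z, ‖∑ j, (u j : α → ℂ) z * g z j‖ ∂ν := norm_integral_le_integral_norm _
    _ ≤ ∫ z, c * ∫ w, ‖ker ν f u (z, w)‖ ∂ν ∂ν := by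
        refine integral_mono_ae
          (integrable_finset_sum _ fun j _ => hgi (u j) j).norm
          (((ker_int ν f hf u).integral_norm_prod_left).const_mul c) ?_
        filter_upwards [hgd] with z hz using hz fun j => (u j : α → ℂ) z
    _ = c * ∫ z, ∫ w, ‖ker ν f u (z, w)‖ ∂ν ∂ν := integral_const_mul c _
    _ = c * ∫ p, ‖ker ν f u p‖ ∂(ν.prod ν) := by
        rw [integral_integral (ker_int ν f hf u).norm]
    _ = c * ‖PiL ν hf u‖ := by rw [PiL_norm]

variable {ν f g} in
lemma exists_G (c : ℝ) (hc : 0 ≤ c) (hf : ∀ j, Integrable (fun x => f x j) ν)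
    (hgi : ∀ (u₀ : α →₁[ν] ℂ) j, Integrable (fun z => (u₀ : α → ℂ) z * g z j) ν)
    (hgd : ∀ᵐ z ∂ν, ∀ a : Fin d → ℂ,
      ‖∑ j, a j * g z j‖ ≤ c * ∫ w, ‖∑ j, a j * f w j‖ ∂ν) :
    ∃ G : ((α × α) →₁[ν.prod ν] ℂ) →L[ℂ] ℂ,
      (∀ q, ‖G q‖ ≤ c * ‖q‖) ∧ ∀ u, G (PiL ν hf u) = LamL ν hgi u := by
  set Pm := PiL ν hf with hPm
  set Lm := LamL ν hgi with hLm
  have hker : LinearMap.ker Pm ≤ LinearMap.ker Lm := by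
    intro u hu
    rw [LinearMap.mem_ker] at hu ⊢
    have := LamL_le c hf hgi hgd u
    rw [← hLm, ← hPm, hu, norm_zero, mul_zero] at this
    exact norm_le_zero_iff.mp this
  set ℓ₀ : ((Fin d → (α →₁[ν] ℂ)) ⧸ LinearMap.ker Pm) →ₗ[ℂ] ℂ :=
    (LinearMap.ker Pm).liftQ Lm hker with hℓ₀
  set e := Pm.quotKerEquivRange with he
  set ℓ : LinearMap.range Pm →ₗ[ℂ] ℂ := ℓ₀.comp (e.symm : _ →ₗ[ℂ] _) with hℓdef
  have hlrep : ∀ u, ℓ ⟨Pm u, LinearMap.mem_range_self Pm u⟩ = Lm u := by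
    intro u
    have h1 : e (Submodule.Quotient.mk u) = ⟨Pm u, LinearMap.mem_range_self Pm u⟩ :=
      Subtype.ext (Pm.quotKerEquivRange_apply_mk u)
    rw [hℓdef, LinearMap.comp_apply, ← h1]
    rw [LinearEquiv.coe_coe, LinearEquiv.symm_apply_apply]
    exact Submodule.liftQ_apply _ Lm u
  have hℓb : ∀ w : LinearMap.range Pm, ‖ℓ w‖ ≤ c * ‖w‖ := by
    rintro ⟨w, hw⟩
    obtain ⟨u, rfl⟩ := LinearMap.mem_range.mp hw
    rw [hlrep u]
    exact LamL_le c hf hgi hgd u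
  set ℓc := ℓ.mkContinuous c hℓb with hℓc
  obtain ⟨G, hGe, hGn⟩ := exists_extension_norm_eq (𝕜 := ℂ) (LinearMap.range Pm) ℓc
  refine ⟨G, ?_, ?_⟩
  · intro q
    refine (G.le_opNorm q).trans (mul_le_mul_of_nonneg_right ?_ (norm_nonneg q))
    rw [hGn]
    exact LinearMap.mkContinuous_norm_le ℓ hc hℓb
  · intro u
    have := hGe ⟨Pm u, LinearMap.mem_range_self Pm u⟩
    simp only [Submodule.coe_mk] at this
    rw [this, hℓc, LinearMap.mkContinuous_apply, hlrep u]

section Rep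

variable {β : Type*} [MeasurableSpace β] (ρ : Measure β) [IsFiniteMeasure ρ]

set_option maxHeartbeats 1000000 in
lemma rep_of_dual (c : ℝ) (hc : 0 ≤ c) (G : (β →₁[ρ] ℂ) →L[ℂ] ℂ)
    (hG : ∀ q, ‖G q‖ ≤ c * ‖q‖) :
    ∃ H : β → ℂ, Measurable H ∧ (∀ p, ‖H p‖ ≤ c) ∧
      ∀ q : β →₁[ρ] ℂ, G q = ∫ p, H p * (q : β → ℂ) p ∂ρ := by
  have h12 : (1 : ℝ≥0∞) ≤ 2 := by norm_num
  have hmem : ∀ v : β →₂[ρ] ℂ, MemLp (v : β → ℂ) 1 ρ := fun v =>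
    (Lp.memLp v).mono_exponent h12
  set J : (β →₂[ρ] ℂ) →ₗ[ℂ] (β →₁[ρ] ℂ) :=
    { toFun := fun v => (hmem v).toLp _
      map_add' := by
        intro a b
        refine Lp.ext ?_
        filter_upwards [MemLp.coeFn_toLp (hmem (a + b)),
          Lp.coeFn_add ((hmem a).toLp _) ((hmem b).toLp _),
          MemLp.coeFn_toLp (hmem a), MemLp.coeFn_toLp (hmem b), Lp.coeFn_add a b]
          with p h1 h2 h3 h4 h5
        rw [h1, h2, h5]
        simp [h3, h4]
      map_smul' := by
        intro a v
        refine Lp.ext ?_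
        filter_upwards [MemLp.coeFn_toLp (hmem (a • v)),
          Lp.coeFn_smul a ((hmem v).toLp _), MemLp.coeFn_toLp (hmem v),
          Lp.coeFn_smul a v] with p h1 h2 h3 h4
        rw [RingHom.id_apply, h1, h2, h4]
        simp [h3] } with hJdef
  have hJcoe : ∀ v : β →₂[ρ] ℂ, (J v : β → ℂ) =ᵐ[ρ] (v : β → ℂ) := fun v =>
    (hmem v).coeFn_toLp
  have hJnorm : ∀ v : β →₂[ρ] ℂ, ‖J v‖ ≤ ((ρ Set.univ) ^ (2⁻¹ : ℝ)).toReal * ‖v‖ := by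
    intro v
    rw [Lp.norm_def, Lp.norm_def, eLpNorm_congr_ae (hJcoe v)]
    have hle := eLpNorm_le_eLpNorm_mul_rpow_measure_univ (μ := ρ) h12
      (Lp.aestronglyMeasurable v)
    have hexp : (1 / (1 : ℝ≥0∞).toReal - 1 / (2 : ℝ≥0∞).toReal) = (2⁻¹ : ℝ) := by
      norm_num
    rw [hexp] at hle
    have h2fin : eLpNorm (v : β → ℂ) 2 ρ ≠ ⊤ := Lp.eLpNorm_ne_top v
    have hmfin : (ρ Set.univ) ^ (2⁻¹ : ℝ) ≠ ⊤ :=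
      (ENNReal.rpow_lt_top_of_nonneg (by norm_num) (measure_ne_top ρ _)).ne
    calc (eLpNorm (v : β → ℂ) 1 ρ).toReal
        ≤ ((eLpNorm (v : β → ℂ) 2 ρ) * (ρ Set.univ) ^ (2⁻¹ : ℝ)).toReal :=
          ENNReal.toReal_mono (ENNReal.mul_ne_top h2fin hmfin) hle
      _ = _ := by rw [ENNReal.toReal_mul]; ring
  set Jc := J.mkContinuous _ hJnorm with hJc
  set T := G.comp Jc with hT
  set H₂ := (InnerProductSpace.toDual ℂ (β →₂[ρ] ℂ)).symm T with hH₂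
  set H₀ : β → ℂ := fun p => (starRingEnd ℂ) ((H₂ : β → ℂ) p) with hH₀def
  have hH₀m : Measurable H₀ :=
    (RCLike.continuous_conj.measurable).comp (Lp.stronglyMeasurable H₂).measurable
  have hrep2 : ∀ v : β →₂[ρ] ℂ, G (J v) = ∫ p, H₀ p * (v : β → ℂ) p ∂ρ := by
    intro v
    have h1 : T v = (inner ℂ H₂ v : ℂ) := (InnerProductSpace.toDual_symm_apply).symm
    have h2 : G (J v) = T v := rfl
    rw [h2, h1, L2.inner_def]
    exact integral_congr_ae (Filter.Eventually.of_forall fun p => by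
      simp [hH₀def, RCLike.inner_apply, mul_comm])
  -- integrability of `‖H₀‖`
  have hH₂int : Integrable (H₂ : β → ℂ) ρ :=
    memLp_one_iff_integrable.mp ((Lp.memLp H₂).mono_exponent h12)
  have hH₀nint : Integrable (fun p => ‖H₀ p‖) ρ := by
    have heq : (fun p => ‖H₀ p‖) = fun p => ‖(H₂ : β → ℂ) p‖ := by
      funext p; simp [hH₀def]
    rw [heq]; exact hH₂int.norm
  set A := {p | c < ‖H₀ p‖} with hAdef
  have hAm : MeasurableSet A := measurableSet_lt measurable_const hH₀m.norm
  -- the a.e. bound `‖H₀‖ ≤ c`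
  have hρA : ρ A = 0 := by
    set s : β → ℂ :=
      fun p => if c < ‖H₀ p‖ then ((‖H₀ p‖ : ℂ))⁻¹ * (starRingEnd ℂ) (H₀ p) else 0 with hsdef
    have hsm : Measurable s := by
      refine Measurable.ite hAm ?_ measurable_const
      exact ((Complex.measurable_ofReal.comp hH₀m.norm).inv).mul
        ((RCLike.continuous_conj.measurable).comp hH₀m)
    have hsnorm : ∀ p, ‖s p‖ = if c < ‖H₀ p‖ then 1 else 0 := by
      intro p
      by_cases h : c < ‖H₀ p‖
      · have hpos : 0 < ‖H₀ p‖ := lt_of_le_of_lt hc h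
        simp only [hsdef, if_pos h, norm_mul, norm_inv, RCLike.norm_conj,
          Complex.norm_real, Real.norm_eq_abs, abs_of_pos hpos]
        rw [inv_mul_cancel₀ hpos.ne']
      · simp only [hsdef, if_neg h, norm_zero]
    have hs2 : MemLp s 2 ρ := by
      refine MemLp.of_bound hsm.aestronglyMeasurable 1 (Filter.Eventually.of_forall fun p => ?_)
      rw [hsnorm p]
      split <;> norm_num
    have hmul : ∀ p, H₀ p * s p = ((if c < ‖H₀ p‖ then ‖H₀ p‖ else 0 : ℝ) : ℂ) := by
      intro p
      by_cases h : c < ‖H₀ p‖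
      · have hpos : 0 < ‖H₀ p‖ := lt_of_le_of_lt hc h
        have hne : ((‖H₀ p‖ : ℝ) : ℂ) ≠ 0 := by
          exact_mod_cast Complex.ofReal_ne_zero.mpr hpos.ne'
        simp only [hsdef, if_pos h]
        have h1 : H₀ p * (((‖H₀ p‖ : ℂ))⁻¹ * (starRingEnd ℂ) (H₀ p))
            = (H₀ p * (starRingEnd ℂ) (H₀ p)) * ((‖H₀ p‖ : ℂ))⁻¹ := by ring
        rw [h1, RCLike.mul_conj, sq]
        field_simp
        rfl
      · simp only [hsdef, if_neg h, mul_zero, Complex.ofReal_zero]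
    set v2 := hs2.toLp s with hv2
    have hGv : G (J v2) = ((∫ p, (if c < ‖H₀ p‖ then ‖H₀ p‖ else 0 : ℝ) ∂ρ : ℝ) : ℂ) := by
      rw [hrep2 v2]
      rw [integral_congr_ae (g := fun p => H₀ p * s p) ?_]
      · rw [show (fun p => H₀ p * s p)
            = fun p => ((if c < ‖H₀ p‖ then ‖H₀ p‖ else 0 : ℝ) : ℂ) from funext hmul]
        exact integral_ofReal
      · filter_upwards [hs2.coeFn_toLp] with p hp
        rw [hp]
    set I := ∫ p, (if c < ‖H₀ p‖ then ‖H₀ p‖ else 0 : ℝ) ∂ρ with hIdef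
    have hInn : 0 ≤ I := integral_nonneg fun p => by split <;> positivity
    have hJvnorm : ‖J v2‖ = (ρ A).toReal := by
      rw [L1.norm_eq_integral_norm]
      rw [integral_congr_ae (g := fun p => ‖s p‖) ?hcg]
      case hcg =>
        filter_upwards [hJcoe v2, hs2.coeFn_toLp] with p h1 h2
        rw [h1, h2]
      rw [show (fun p => ‖s p‖) = A.indicator (1 : β → ℝ) from funext fun p => by
        rw [hsnorm p, Set.indicator_apply]; simp only [Pi.one_apply]; rfl]
      exact integral_indicator_one hAm
    have hIle : I ≤ c * (ρ A).toReal := by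
      have h1 := hG (J v2)
      rw [hGv, hJvnorm] at h1
      rw [Complex.norm_real, Real.norm_eq_abs, abs_of_nonneg hInn] at h1
      exact h1
    -- ∫ (indicator A (‖H₀‖ - c)) = I - c * ρ(A), which is ≤ 0 and ≥ 0
    have hindint : Integrable (A.indicator fun p => ‖H₀ p‖ - c) ρ :=
      ((hH₀nint.sub (integrable_const c)).indicator hAm)
    have hindnn : 0 ≤ᵐ[ρ] (A.indicator fun p => ‖H₀ p‖ - c) := by
      refine Filter.Eventually.of_forall fun p => Set.indicator_apply_nonneg fun hp => ?_
      have : c < ‖H₀ p‖ := hp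
      linarith
    have hindval : ∫ p, (A.indicator fun p => ‖H₀ p‖ - c) p ∂ρ = I - c * (ρ A).toReal := by
      have hsplit : (A.indicator fun p => ‖H₀ p‖ - c)
          = fun p => (if c < ‖H₀ p‖ then ‖H₀ p‖ else 0 : ℝ) - c * (A.indicator (1 : β → ℝ) p) := by
        funext p
        rw [Set.indicator_apply, Set.indicator_apply]
        by_cases h : p ∈ A
        · simp only [if_pos h, Pi.one_apply]
          have h' : c < ‖H₀ p‖ := h
          rw [if_pos h']; ring
        · simp only [if_neg h, Pi.one_apply]
          have h' : ¬ c < ‖H₀ p‖ := h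
          rw [if_neg h']; ring
      rw [hsplit]
      rw [integral_sub ?_ ?_]
      · rw [integral_const_mul, integral_indicator_one hAm]
        rfl
      · have : Integrable (fun p => (if c < ‖H₀ p‖ then ‖H₀ p‖ else 0 : ℝ)) ρ := by
          have heq : (fun p => (if c < ‖H₀ p‖ then ‖H₀ p‖ else 0 : ℝ))
              = A.indicator fun p => ‖H₀ p‖ := by
            funext p; rw [Set.indicator_apply]; rfl
          rw [heq]; exact hH₀nint.indicator hAm
        exact this
      · exact ((integrable_const (1:ℝ)).indicator hAm).const_mul c
    have hind0 : ∫ p, (A.indicator fun p => ‖H₀ p‖ - c) p ∂ρ = 0 := by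
      have hge := integral_nonneg_of_ae hindnn
      have hle : ∫ p, (A.indicator fun p => ‖H₀ p‖ - c) p ∂ρ ≤ 0 := by
        rw [hindval]; linarith
      linarith
    have haez : (A.indicator fun p => ‖H₀ p‖ - c) =ᵐ[ρ] 0 :=
      (integral_eq_zero_iff_of_nonneg_ae hindnn hindint).mp hind0
    have hsub : A ⊆ {p | ¬ ((A.indicator fun p => ‖H₀ p‖ - c) p = (0 : β → ℝ) p)} := by
      intro p hp
      have h' : c < ‖H₀ p‖ := hp
      simp only [Set.mem_setOf_eq, Set.indicator_of_mem hp, Pi.zero_apply]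
      intro habs
      linarith
    exact measure_mono_null hsub haez
  have hH₀b : ∀ᵐ p ∂ρ, ‖H₀ p‖ ≤ c := by
    rw [ae_iff]
    have : {p | ¬ ‖H₀ p‖ ≤ c} = A := by
      ext p; simp [hAdef, not_le]
    rwa [this]
  -- truncate
  set H : β → ℂ := fun p => if ‖H₀ p‖ ≤ c then H₀ p else 0 with hHdef
  have hHm : Measurable H :=
    Measurable.ite (measurableSet_le hH₀m.norm measurable_const) hH₀m measurable_const
  have hHb : ∀ p, ‖H p‖ ≤ c := by
    intro p
    show ‖if ‖H₀ p‖ ≤ c then H₀ p else 0‖ ≤ c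
    by_cases h : ‖H₀ p‖ ≤ c
    · rw [if_pos h]; exact h
    · rw [if_neg h, norm_zero]; exact hc
  have hHae : H =ᵐ[ρ] H₀ := by
    filter_upwards [hH₀b] with p hp
    show (if ‖H₀ p‖ ≤ c then H₀ p else 0) = H₀ p
    rw [if_pos hp]
  -- the functional `q ↦ ∫ H * q` and density
  have hRint : ∀ q : β →₁[ρ] ℂ, Integrable (fun p => H p * (q : β → ℂ) p) ρ := fun q =>
    (L1.integrable_coeFn q).bdd_mul hHm.aestronglyMeasurable (Filter.Eventually.of_forall hHb)
  set R₀ : (β →₁[ρ] ℂ) →ₗ[ℂ] ℂ :=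
    { toFun := fun q => ∫ p, H p * (q : β → ℂ) p ∂ρ
      map_add' := by
        intro a b
        rw [← integral_add (hRint a) (hRint b)]
        refine integral_congr_ae ?_
        filter_upwards [Lp.coeFn_add a b] with p hp
        simp only [Pi.add_apply] at hp ⊢
        rw [hp, mul_add]
      map_smul' := by
        intro a q
        rw [RingHom.id_apply, smul_eq_mul, ← integral_const_mul]
        refine integral_congr_ae ?_
        filter_upwards [Lp.coeFn_smul a q] with p hp
        simp only [Pi.smul_apply, smul_eq_mul] at hp ⊢
        rw [hp]; ring } with hR₀def
  have hRb : ∀ q : β →₁[ρ] ℂ, ‖R₀ q‖ ≤ c * ‖q‖ := by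
    intro q
    calc ‖∫ p, H p * (q : β → ℂ) p ∂ρ‖
        ≤ ∫ p, ‖H p * (q : β → ℂ) p‖ ∂ρ := norm_integral_le_integral_norm _
      _ ≤ ∫ p, c * ‖(q : β → ℂ) p‖ ∂ρ := by
          refine integral_mono (hRint q).norm ((L1.integrable_coeFn q).norm.const_mul c)
            fun p => ?_
          rw [norm_mul]
          exact mul_le_mul_of_nonneg_right (hHb p) (norm_nonneg _)
      _ = c * ‖q‖ := by rw [integral_const_mul, ← L1.norm_eq_integral_norm]
  set R := R₀.mkContinuous c hRb with hRdef
  have hGR : (⇑G : (β →₁[ρ] ℂ) → ℂ) = ⇑R := by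
    refine (Lp.simpleFunc.denseRange (E := ℂ) (μ := ρ) (p := 1) ENNReal.one_ne_top).equalizer
      G.continuous R.continuous (funext fun sf => ?_)
    show G ↑sf = R ↑sf
    set σ := Lp.simpleFunc.toSimpleFunc sf with hσdef
    have hσ : ⇑σ =ᵐ[ρ] ((sf : Lp ℂ 1 ρ) : β → ℂ) := Lp.simpleFunc.toSimpleFunc_eq_toFun sf
    obtain ⟨C, hC⟩ := σ.exists_forall_norm_le
    have hσ2 : MemLp (⇑σ) 2 ρ :=
      MemLp.of_bound σ.aestronglyMeasurable C (Filter.Eventually.of_forall hC)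
    have hJv : J (hσ2.toLp σ) = (↑sf : Lp ℂ 1 ρ) :=
      Lp.ext ((hJcoe _).trans ((hσ2.coeFn_toLp).trans hσ))
    calc G ↑sf = G (J (hσ2.toLp σ)) := by rw [hJv]
      _ = ∫ p, H₀ p * ((hσ2.toLp σ : β →₂[ρ] ℂ) : β → ℂ) p ∂ρ := hrep2 _
      _ = ∫ p, H p * ((sf : Lp ℂ 1 ρ) : β → ℂ) p ∂ρ := by
          refine integral_congr_ae ?_
          filter_upwards [hHae, hσ2.coeFn_toLp, hσ] with p h1 h2 h3
          rw [h1, h2, h3]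
      _ = R ↑sf := rfl
  refine ⟨H, hHm, hHb, fun q => ?_⟩
  rw [congrFun hGR q]
  rfl

end Rep

set_option maxHeartbeats 1000000 in
theorem aux (ν : Measure α) [IsFiniteMeasure ν] (c : ℝ) (hc : 0 ≤ c)
    (f : α → Fin d → ℂ) (hf : ∀ j, Integrable (fun x => f x j) ν)
    (g : α → Fin d → ℂ) (hgm : ∀ j, Measurable fun x => g x j)
    (hg : ∀ᵐ z ∂ν, ∃ φ : α → ℂ, Measurable φ ∧ (∀ x, ‖φ x‖ ≤ 1) ∧
      ∀ j, g z j = (c : ℂ) * ∫ x, φ x * f x j ∂ν) :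
    ∃ H : α × α → ℂ, Measurable H ∧ (∀ p, ‖H p‖ ≤ c) ∧
      ∀ᵐ z ∂ν, ∀ j, g z j = ∫ w, H (z, w) * f w j ∂ν := by
  classical
  -- the pointwise duality bound
  have hgd : ∀ᵐ z ∂ν, ∀ a : Fin d → ℂ,
      ‖∑ j, a j * g z j‖ ≤ c * ∫ w, ‖∑ j, a j * f w j‖ ∂ν := by
    filter_upwards [hg] with z hz
    obtain ⟨φ, hφm, hφ1, hrep⟩ := hz
    intro a
    have hint : ∀ j, Integrable (fun w => φ w * f w j) ν := fun j =>
      (hf j).bdd_mul hφm.aestronglyMeasurable (Filter.Eventually.of_forall hφ1)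
    have hSint : Integrable (fun w => ∑ j, a j * f w j) ν :=
      integrable_finset_sum _ fun j _ => (hf j).const_mul (a j)
    have h1 : ∑ j, a j * g z j = (c : ℂ) * ∫ w, φ w * ∑ j, a j * f w j ∂ν := by
      have e1 : ∀ j ∈ Finset.univ, a j * g z j
          = (c : ℂ) * ∫ w, a j * (φ w * f w j) ∂ν := fun j _ => by
        rw [hrep j, integral_const_mul]
        ring
      rw [Finset.sum_congr rfl e1, ← Finset.mul_sum]
      congr 1
      rw [← integral_finset_sum _ fun j _ => (hint j).const_mul (a j)]
      refine integral_congr_ae (Filter.Eventually.of_forall fun w => ?_)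
      show (∑ j, a j * (φ w * f w j)) = φ w * ∑ j, a j * f w j
      rw [Finset.mul_sum]
      exact Finset.sum_congr rfl fun j _ => by ring
    rw [h1, norm_mul, Complex.norm_real, Real.norm_eq_abs, abs_of_nonneg hc]
    refine mul_le_mul_of_nonneg_left ?_ hc
    calc ‖∫ w, φ w * ∑ j, a j * f w j ∂ν‖
        ≤ ∫ w, ‖φ w * ∑ j, a j * f w j‖ ∂ν := norm_integral_le_integral_norm _
      _ ≤ ∫ w, ‖∑ j, a j * f w j‖ ∂ν := by
          refine integral_mono
            ((hSint.bdd_mul hφm.aestronglyMeasurable (Filter.Eventually.of_forall hφ1)).norm) hSint.norm fun w => ?_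
          rw [norm_mul]
          calc ‖φ w‖ * ‖∑ j, a j * f w j‖ ≤ 1 * ‖∑ j, a j * f w j‖ :=
              mul_le_mul_of_nonneg_right (hφ1 w) (norm_nonneg _)
            _ = _ := one_mul _
  -- the a.e. bound on `g`
  have hgb : ∀ᵐ z ∂ν, ∀ j, ‖g z j‖ ≤ c * ∫ w, ‖f w j‖ ∂ν := by
    filter_upwards [hg] with z hz j
    obtain ⟨φ, hφm, hφ1, hrep⟩ := hz
    have hint : Integrable (fun w => φ w * f w j) ν :=
      (hf j).bdd_mul hφm.aestronglyMeasurable (Filter.Eventually.of_forall hφ1)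
    rw [hrep j, norm_mul, Complex.norm_real, Real.norm_eq_abs, abs_of_nonneg hc]
    refine mul_le_mul_of_nonneg_left ?_ hc
    calc ‖∫ w, φ w * f w j ∂ν‖ ≤ ∫ w, ‖φ w * f w j‖ ∂ν := norm_integral_le_integral_norm _
      _ ≤ ∫ w, ‖f w j‖ ∂ν := by
          refine integral_mono hint.norm (hf j).norm fun w => ?_
          rw [norm_mul]
          calc ‖φ w‖ * ‖f w j‖ ≤ 1 * ‖f w j‖ :=
              mul_le_mul_of_nonneg_right (hφ1 w) (norm_nonneg _)
            _ = _ := one_mul _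
  -- integrability of `u₀ * g j` for `u₀ ∈ L¹`
  have hgi : ∀ (u₀ : α →₁[ν] ℂ) j, Integrable (fun z => (u₀ : α → ℂ) z * g z j) ν := by
    intro u₀ j
    have h := (L1.integrable_coeFn u₀).bdd_mul (c := c * ∫ w, ‖f w j‖ ∂ν)
      ((hgm j).aestronglyMeasurable) (hgb.mono fun z hz => hz j)
    exact h.congr (Filter.Eventually.of_forall fun z => mul_comm _ _)
  obtain ⟨G, hGb, hGrep⟩ := exists_G c hc hf hgi hgd
  obtain ⟨H, hHm, hHb, hHrep⟩ := rep_of_dual (ν.prod ν) c hc G hGb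
  refine ⟨H, hHm, hHb, ?_⟩
  set M : Fin d → α → ℂ := fun j z => ∫ w, H (z, w) * f w j ∂ν with hM
  -- the key identity: for every integrable `u₀`, `∫ u₀ gⱼ = ∫ u₀ Mⱼ`
  have key : ∀ (u₀ : α → ℂ) (hu₀ : Integrable u₀ ν) (j : Fin d),
      ∫ z, u₀ z * g z j ∂ν = ∫ z, u₀ z * M j z ∂ν := by
    intro u₀ hu₀ j
    set U : Fin d → (α →₁[ν] ℂ) := Pi.single j (hu₀.toL1 u₀) with hU
    have hUcoe : ∀ᵐ z ∂ν, ∀ j', (U j' : α → ℂ) z = if j' = j then u₀ z else 0 := by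
      rw [ae_all_iff]
      intro j'
      by_cases h : j' = j
      · subst h
        have : U j' = hu₀.toL1 u₀ := by rw [hU, Pi.single_eq_same]
        rw [this]
        filter_upwards [hu₀.coeFn_toL1] with z hz
        rw [if_pos rfl, hz]
      · have : U j' = 0 := by rw [hU, Pi.single_eq_of_ne h]
        rw [this]
        filter_upwards [Lp.coeFn_zero (E := ℂ) (p := 1) (μ := ν)] with z hz
        rw [if_neg h, hz]
        rfl
    have hLam : LamL ν hgi U = ∫ z, u₀ z * g z j ∂ν := by
      show (∑ j', ∫ z, (U j' : α → ℂ) z * g z j' ∂ν) = _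
      rw [Finset.sum_eq_single j]
      · refine integral_congr_ae ?_
        filter_upwards [hUcoe] with z hz
        rw [hz j, if_pos rfl]
      · intro j' _ hj'
        rw [show (0 : ℂ) = ∫ z, (0 : ℂ) ∂ν from (integral_zero _ _).symm]
        refine integral_congr_ae ?_
        filter_upwards [hUcoe] with z hz
        rw [hz j', if_neg hj', zero_mul]
      · intro h
        exact absurd (Finset.mem_univ j) h
    have hPi : G (PiL ν hf U) = ∫ p, H p * (u₀ p.1 * f p.2 j) ∂(ν.prod ν) := by
      rw [hHrep (PiL ν hf U)]
      refine integral_congr_ae ?_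
      have hker : (PiL ν hf U : α × α → ℂ) =ᵐ[ν.prod ν]
          fun p => u₀ p.1 * f p.2 j := by
        refine (PiL_coe ν hf U).trans ?_
        filter_upwards [ae_fst (ν := ν) hUcoe] with p hp
        show (∑ j', (U j' : α → ℂ) p.1 * f p.2 j') = u₀ p.1 * f p.2 j
        rw [Finset.sum_congr rfl fun j' _ => by rw [hp j', ite_mul, zero_mul]]
        exact (Finset.sum_ite_eq' Finset.univ j (fun j' => u₀ p.1 * f p.2 j')).trans
          (if_pos (Finset.mem_univ j))
      filter_upwards [hker] with p hp
      rw [hp]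
    have hFub : ∫ p, H p * (u₀ p.1 * f p.2 j) ∂(ν.prod ν) = ∫ z, u₀ z * M j z ∂ν := by
      have hint2 : Integrable (fun p : α × α => H p * (u₀ p.1 * f p.2 j)) (ν.prod ν) :=
        (hu₀.mul_prod (hf j)).bdd_mul hHm.aestronglyMeasurable (Filter.Eventually.of_forall hHb)
      rw [integral_prod _ hint2]
      refine integral_congr_ae (Filter.Eventually.of_forall fun z => ?_)
      show ∫ w, H (z, w) * (u₀ z * f w j) ∂ν = u₀ z * M j z
      rw [show (fun w => H (z, w) * (u₀ z * f w j)) = fun w => u₀ z * (H (z, w) * f w j)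
        from funext fun w => by ring]
      rw [integral_const_mul]
    rw [← hLam, ← hGrep U, hPi, hFub]
  -- measurability and boundedness of `M`
  have hMm : ∀ j, AEStronglyMeasurable (M j) ν := by
    intro j
    refine AEStronglyMeasurable.integral_prod_right' (f := fun p => H p * f p.2 j) ?_
    exact hHm.aestronglyMeasurable.mul
      (((hf j).1).comp_quasiMeasurePreserving Measure.quasiMeasurePreserving_snd)
  have hMb : ∀ j z, ‖M j z‖ ≤ c * ∫ w, ‖f w j‖ ∂ν := by
    intro j z
    calc ‖∫ w, H (z, w) * f w j ∂ν‖ ≤ ∫ w, ‖H (z, w) * f w j‖ ∂ν :=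
        norm_integral_le_integral_norm _
      _ ≤ ∫ w, c * ‖f w j‖ ∂ν := by
          refine integral_mono
            (((hf j).bdd_mul (hHm.comp measurable_prodMk_left).aestronglyMeasurable
              (Filter.Eventually.of_forall fun w => hHb _)).norm)
            ((hf j).norm.const_mul c) fun w => ?_
          rw [norm_mul]
          exact mul_le_mul_of_nonneg_right (hHb _) (norm_nonneg _)
      _ = c * ∫ w, ‖f w j‖ ∂ν := integral_const_mul c _
  -- conclude `g = M` a.e., one coordinate at a time
  rw [ae_all_iff]
  intro j
  set B := c * ∫ w, ‖f w j‖ ∂ν with hB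
  set q : α → ℂ := fun z => g z j - M j z with hq
  have hqm : AEStronglyMeasurable q ν := ((hgm j).aestronglyMeasurable).sub (hMm j)
  have hqb : ∀ᵐ z ∂ν, ‖q z‖ ≤ B + B := by
    filter_upwards [hgb] with z hz
    calc ‖g z j - M j z‖ ≤ ‖g z j‖ + ‖M j z‖ := norm_sub_le _ _
      _ ≤ B + B := add_le_add (hz j) (hMb j z)
  have hqint : Integrable q ν := Integrable.mono' (integrable_const (B + B)) hqm hqb
  have hu₀ : Integrable (fun z => (starRingEnd ℂ) (q z)) ν := by
    refine Integrable.mono' hqint.norm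
      (RCLike.continuous_conj.comp_aestronglyMeasurable hqm)
      (Filter.Eventually.of_forall fun z => le_of_eq (RCLike.norm_conj _))
  have i1 : Integrable (fun z => (starRingEnd ℂ) (q z) * g z j) ν := by
    have h := hu₀.bdd_mul (c := B) ((hgm j).aestronglyMeasurable)
      (hgb.mono fun z hz => hz j)
    exact h.congr (Filter.Eventually.of_forall fun z => mul_comm _ _)
  have i2 : Integrable (fun z => (starRingEnd ℂ) (q z) * M j z) ν := by
    have h := hu₀.bdd_mul (c := B) (hMm j)
      (Filter.Eventually.of_forall fun z => hMb j z)
    exact h.congr (Filter.Eventually.of_forall fun z => mul_comm _ _)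
  have h0 : ∫ z, (starRingEnd ℂ) (q z) * q z ∂ν = 0 := by
    have heq : (fun z => (starRingEnd ℂ) (q z) * q z)
        = fun z => (starRingEnd ℂ) (q z) * g z j - (starRingEnd ℂ) (q z) * M j z :=
      funext fun z => by rw [hq]; ring
    rw [heq, integral_sub i1 i2, key _ hu₀ j, sub_self]
  have hreal0 : ∫ z, ‖q z‖ ^ 2 ∂ν = 0 := by
    have heq : (fun z => (starRingEnd ℂ) (q z) * q z)
        = fun z => ((‖q z‖ ^ 2 : ℝ) : ℂ) := funext fun z => by
      rw [RCLike.conj_mul]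
      norm_cast
    rw [heq] at h0
    have h1 : ((∫ z, ‖q z‖ ^ 2 ∂ν : ℝ) : ℂ) = 0 := by
      rw [← h0]
      exact integral_ofReal.symm
    exact_mod_cast h1
  have hnint : Integrable (fun z => ‖q z‖ ^ 2) ν := by
    refine Integrable.mono' (integrable_const ((B + B) ^ 2))
      ((continuous_pow 2).comp_aestronglyMeasurable hqm.norm) ?_
    filter_upwards [hqb] with z hz
    rw [Real.norm_eq_abs, abs_of_nonneg (by positivity)]
    exact pow_le_pow_left₀ (norm_nonneg _) hz 2
  have hq0 : (fun z => ‖q z‖ ^ 2) =ᵐ[ν] 0 :=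
    (integral_eq_zero_iff_of_nonneg_ae
      (Filter.Eventually.of_forall fun z => by positivity) hnint).mp hreal0
  filter_upwards [hq0] with z hz
  simp only [Pi.zero_apply] at hz
  have h2 : ‖q z‖ = 0 := (pow_eq_zero_iff (two_ne_zero)).mp hz
  have h3 : q z = 0 := norm_eq_zero.mp h2
  exact sub_eq_zero.mp (show g z j - M j z = 0 from h3)


end Stmt5Aux


/-- If `g(x) ∈ ⟪f⟫_Q` a.e. on `Q`, then there is a measurable kernel `H` on
`Q × Q` with `‖H‖_∞ ≤ |Q|⁻¹` such that `g(z) = ∫_Q H(z,w) f(w) dV(w)` for a.e. `z ∈ Q`. -/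
theorem stmt5 {d : ℕ} {α : Type*} [MeasurableSpace α] (μ : Measure α)
    (Q : Set α) (hQm : MeasurableSet Q) (hQpos : 0 < μ Q) (hQfin : μ Q < ⊤)
    (f : α → Fin d → ℂ) (hf : ∀ j, IntegrableOn (fun x => f x j) Q μ)
    (g : α → Fin d → ℂ) (hgm : ∀ j, Measurable fun x => g x j)
    (hg : ∀ᵐ x ∂μ.restrict Q, g x ∈ convexBodyAvg μ Q f) :
    ∃ H : α × α → ℂ, Measurable H ∧ (∀ p, ‖H p‖ ≤ (μ Q).toReal⁻¹) ∧
      ∀ᵐ z ∂μ.restrict Q, ∀ j, g z j = ∫ w in Q, H (z, w) * f w j ∂μ := by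
  haveI : IsFiniteMeasure (μ.restrict Q) :=
    ⟨by rwa [Measure.restrict_apply_univ]⟩
  have hc : (0 : ℝ) ≤ (μ Q).toReal⁻¹ := inv_nonneg.mpr ENNReal.toReal_nonneg
  exact Stmt5Aux.aux (μ.restrict Q) ((μ Q).toReal⁻¹) hc f hf g hgm (hg.mono fun x hx => by simpa [convexBodyAvg] using hx)
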